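/- In a metric space, let S_{t−1} and S^A_{t−1} be the sets of servers matched by two processes before round t, and suppose s_t and s^A_t are matched together in a minimum-cost perfect matching between S \ S_{t−1} and S \ S^A_{t−1} in which all servers in S \ (S_{t−1} ∪ S^A_{t−1}) are matched to themselves. Then d(s_t, s^A_t) = dist(S_{t−1}, S^A_{t−1}) − dist(S_t, S^A_t), where S_t = S_{t−1} ∪ {s_t} and S^A_t = S^A_{t−1} ∪ {s^A_t}. -/

import Mathlib

/-- The minimum cost of a perfect matching between two equal-size multisets
in a metric space. -/
noncomputable def mdist {V : Type*} [MetricSpace V] (A B : Multiset V) : ℝ :=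
  sInf {c : ℝ | ∃ l₁ l₂ : List V, (l₁ : Multiset V) = A ∧ (l₂ : Multiset V) = B ∧
    c = (List.zipWith dist l₁ l₂).sum}

open Multiset

/-- Cost of a multiset of matched pairs. -/
noncomputable def mcost {V : Type*} [MetricSpace V] (m : Multiset (V × V)) : ℝ :=
  (m.map fun p => dist p.1 p.2).sum

lemma mcost_cons {V : Type*} [MetricSpace V] (p : V × V) (m : Multiset (V × V)) :
    mcost (p ::ₘ m) = dist p.1 p.2 + mcost m := by simp [mcost]

lemma mcost_nonneg {V : Type*} [MetricSpace V] (m : Multiset (V × V)) : 0 ≤ mcost m :=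
  Multiset.sum_nonneg (by rintro x hx; obtain ⟨p, -, rfl⟩ := Multiset.mem_map.1 hx; exact dist_nonneg)

/-- The set of matching costs, as pair multisets. -/
def mset {V : Type*} [MetricSpace V] (A B : Multiset V) : Set ℝ :=
  {c : ℝ | ∃ m : Multiset (V × V), m.map Prod.fst = A ∧ m.map Prod.snd = B ∧ c = mcost m}

lemma mset_bddBelow {V : Type*} [MetricSpace V] (A B : Multiset V) : BddBelow (mset A B) :=
  ⟨0, by rintro c ⟨m, -, -, rfl⟩; exact mcost_nonneg m⟩

lemma mset_nonempty {V : Type*} [MetricSpace V] {A B : Multiset V}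
    (h : Multiset.card A = Multiset.card B) : (mset A B).Nonempty := by
  obtain ⟨l₁, rfl⟩ : ∃ l : List V, (l : Multiset V) = A := ⟨A.toList, A.coe_toList⟩
  obtain ⟨l₂, rfl⟩ : ∃ l : List V, (l : Multiset V) = B := ⟨B.toList, B.coe_toList⟩
  have hl : l₁.length = l₂.length := by simpa using h
  refine ⟨_, ↑(l₁.zip l₂), ?_, ?_, rfl⟩
  · simp [List.map_fst_zip hl.le]
  · simp [List.map_snd_zip hl.ge]

lemma mdist_eq_mset {V : Type*} [MetricSpace V] {A B : Multiset V}
    (h : Multiset.card A = Multiset.card B) : mdist A B = sInf (mset A B) := by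
  unfold mdist
  congr 1
  ext c
  constructor
  · rintro ⟨l₁, l₂, rfl, rfl, rfl⟩
    have hl : l₁.length = l₂.length := by simpa using h
    refine ⟨↑(l₁.zip l₂), by simp [List.map_fst_zip hl.le],
      by simp [List.map_snd_zip hl.ge], ?_⟩
    simp [mcost, List.zip, List.map_zipWith]
  · rintro ⟨m, h1, h2, rfl⟩
    obtain ⟨l, rfl⟩ : ∃ l : List (V × V), (l : Multiset (V × V)) = m := ⟨m.toList, m.coe_toList⟩
    refine ⟨l.map Prod.fst, l.map Prod.snd, by simpa using h1, by simpa using h2, ?_⟩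
    simp [mcost, List.zipWith_map, List.zipWith_self]

/-- Uncrossing: a matching of `c ::ₘ A` with `c ::ₘ B` yields a no-costlier matching of `A`, `B`. -/
lemma reduce {V : Type*} [MetricSpace V] (c : V) (A B : Multiset V) (m : Multiset (V × V))
    (h1 : m.map Prod.fst = c ::ₘ A) (h2 : m.map Prod.snd = c ::ₘ B) :
    ∃ m' : Multiset (V × V), m'.map Prod.fst = A ∧ m'.map Prod.snd = B ∧ mcost m' ≤ mcost m := by
  have hc1 : c ∈ m.map Prod.fst := by rw [h1]; exact Multiset.mem_cons_self _ _
  obtain ⟨p, hp, hpc⟩ := Multiset.mem_map.1 hc1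
  obtain ⟨m₀, rfl⟩ := Multiset.exists_cons_of_mem hp
  rw [Multiset.map_cons, hpc] at h1
  rw [Multiset.map_cons] at h2
  have hA : m₀.map Prod.fst = A := by rwa [Multiset.cons_inj_right] at h1
  by_cases hb : p.2 = c
  · rw [hb] at h2
    have hB : m₀.map Prod.snd = B := by rwa [Multiset.cons_inj_right] at h2
    refine ⟨m₀, hA, hB, ?_⟩
    rw [mcost_cons, hpc, hb, dist_self, zero_add]
  · have hc2 : c ∈ m₀.map Prod.snd := by
      have hmem : c ∈ p.2 ::ₘ m₀.map Prod.snd := by rw [h2]; exact Multiset.mem_cons_self _ _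
      rcases Multiset.mem_cons.1 hmem with h | h
      · exact absurd h.symm hb
      · exact h
    obtain ⟨q, hq, hqc⟩ := Multiset.mem_map.1 hc2
    obtain ⟨m₁, rfl⟩ := Multiset.exists_cons_of_mem hq
    rw [Multiset.map_cons] at hA
    rw [Multiset.map_cons, hqc, Multiset.cons_swap, Multiset.cons_inj_right] at h2
    refine ⟨(q.1, p.2) ::ₘ m₁, ?_, ?_, ?_⟩
    · rw [Multiset.map_cons]; exact hA
    · rw [Multiset.map_cons]; exact h2
    · rw [mcost_cons, mcost_cons, mcost_cons, hpc, hqc]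
      dsimp only
      have := dist_triangle q.1 c p.2
      linarith

lemma mdist_cons {V : Type*} [MetricSpace V] (c : V) {A B : Multiset V}
    (h : Multiset.card A = Multiset.card B) : mdist (c ::ₘ A) (c ::ₘ B) = mdist A B := by
  rw [mdist_eq_mset h, mdist_eq_mset (by simp [h])]
  apply le_antisymm
  · refine le_csInf (mset_nonempty h) ?_
    rintro x ⟨m, h1, h2, rfl⟩
    refine csInf_le (mset_bddBelow _ _) ⟨(c, c) ::ₘ m, by simp [h1], by simp [h2], ?_⟩
    rw [mcost_cons]; simp
  · refine le_csInf (mset_nonempty (by simp [h])) ?_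
    rintro x ⟨m, h1, h2, rfl⟩
    obtain ⟨m', hA, hB, hle⟩ := reduce c A B m h1 h2
    exact le_trans (csInf_le (mset_bddBelow _ _) ⟨m', hA, hB, rfl⟩) hle

lemma mdist_add {V : Type*} [MetricSpace V] (C : Multiset V) {A B : Multiset V}
    (h : Multiset.card A = Multiset.card B) : mdist (C + A) (C + B) = mdist A B := by
  induction C using Multiset.induction_on with
  | empty => simp
  | cons c C ih => rw [Multiset.cons_add, Multiset.cons_add, mdist_cons c (by simp [h]), ih]

lemma mdist_comm {V : Type*} [MetricSpace V] (A B : Multiset V) : mdist A B = mdist B A := by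
  unfold mdist
  congr 1
  ext c
  constructor <;> rintro ⟨l₁, l₂, rfl, rfl, rfl⟩ <;>
    exact ⟨l₂, l₁, rfl, rfl, by rw [List.zipWith_comm_of_comm dist_comm]⟩

lemma disj_val {V : Type*} [DecidableEq V] {s t : Finset V} (h : Disjoint s t) :
    (s ∪ t).val = s.val + t.val := by rw [← Finset.disjUnion_eq_union s t h]; rfl

/-- Complement cancellation: `mdist (S \ X) (S \ Y) = mdist X Y`. -/
lemma mdist_compl {V : Type*} [MetricSpace V] [DecidableEq V] {S X Y : Finset V}
    (hX : X ⊆ S) (hY : Y ⊆ S) (hcard : X.card = Y.card) :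
    mdist (S \ X).val (S \ Y).val = mdist X.val Y.val := by
  have hcXY : (X \ Y).card = (Y \ X).card := by
    have h1 := Finset.card_sdiff_add_card_inter X Y
    have h2 := Finset.card_sdiff_add_card_inter Y X
    rw [Finset.inter_comm] at h2
    omega
  have hcard' : Multiset.card (Y \ X).val = Multiset.card (X \ Y).val := by
    exact hcXY.symm
  have hSX : (S \ X).val = (S \ (X ∪ Y)).val + (Y \ X).val := by
    have he : S \ (X ∪ Y) ∪ (Y \ X) = S \ X := by
      ext a
      simp only [Finset.mem_union, Finset.mem_sdiff, Finset.mem_union]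
      constructor
      · rintro (⟨hs, h⟩ | ⟨hy, hx⟩)
        · exact ⟨hs, fun hx => h (Or.inl hx)⟩
        · exact ⟨hY hy, hx⟩
      · rintro ⟨hs, hx⟩
        by_cases hy : a ∈ Y
        · exact Or.inr ⟨hy, hx⟩
        · exact Or.inl ⟨hs, fun h => h.elim hx hy⟩
    rw [← he, disj_val]
    exact Finset.sdiff_disjoint.mono_right (Finset.sdiff_subset.trans Finset.subset_union_right)
  have hSY : (S \ Y).val = (S \ (X ∪ Y)).val + (X \ Y).val := by
    have he : S \ (Y ∪ X) ∪ (X \ Y) = S \ Y := by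
      ext a
      simp only [Finset.mem_union, Finset.mem_sdiff, Finset.mem_union]
      constructor
      · rintro (⟨hs, h⟩ | ⟨hx, hy⟩)
        · exact ⟨hs, fun hy => h (Or.inl hy)⟩
        · exact ⟨hX hx, hy⟩
      · rintro ⟨hs, hy⟩
        by_cases hx : a ∈ X
        · exact Or.inr ⟨hx, hy⟩
        · exact Or.inl ⟨hs, fun h => h.elim hy hx⟩
    rw [Finset.union_comm Y X] at he
    rw [← he, disj_val]
    exact Finset.sdiff_disjoint.mono_right (Finset.sdiff_subset.trans Finset.subset_union_left)
  have hXv : X.val = (X ∩ Y).val + (X \ Y).val := by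
    have he : (X ∩ Y) ∪ (X \ Y) = X := by
      rw [Finset.union_comm]; exact Finset.sdiff_union_inter X Y
    have hv := disj_val (Finset.disjoint_sdiff_inter X Y).symm
    rw [he] at hv
    exact hv
  have hYv : Y.val = (X ∩ Y).val + (Y \ X).val := by
    have he : (Y ∩ X) ∪ (Y \ X) = Y := by
      rw [Finset.union_comm]; exact Finset.sdiff_union_inter Y X
    rw [Finset.inter_comm] at he
    have hv := disj_val (s := X ∩ Y) (t := Y \ X)
      (by rw [Finset.inter_comm]; exact (Finset.disjoint_sdiff_inter Y X).symm)
    rw [he] at hv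
    exact hv
  rw [hSX, hSY, mdist_add _ hcard', mdist_comm, hXv, hYv,
    mdist_add _ (show Multiset.card (X \ Y).val = Multiset.card (Y \ X).val from hcXY)]

/-- If `s` and `sA` are matched together in a minimum-cost perfect matching between
`S \ S_{t−1}` and `S \ S^A_{t−1}`, then
`d(s, sA) = dist(S_{t−1}, S^A_{t−1}) − dist(S_t, S^A_t)` where
`S_t = S_{t−1} ∪ {s}` and `S^A_t = S^A_{t−1} ∪ {sA}`. -/
theorem stmt14 {V : Type*} [MetricSpace V] [DecidableEq V]
    (S X Y : Finset V) (hX : X ⊆ S) (hY : Y ⊆ S) (hcard : X.card = Y.card)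
    (s sA : V) (hs : s ∈ S \ X) (hsA : sA ∈ S \ Y)
    (hmatch : mdist (S \ X).val (S \ Y).val =
      dist s sA + mdist ((S \ X).erase s).val ((S \ Y).erase sA).val) :
    dist s sA = mdist X.val Y.val - mdist (insert s X).val (insert sA Y).val := by
  rw [Finset.mem_sdiff] at hs hsA
  have h1 : mdist (S \ X).val (S \ Y).val = mdist X.val Y.val := mdist_compl hX hY hcard
  have he1 : (S \ X).erase s = S \ insert s X := (Finset.sdiff_insert S X s).symm
  have he2 : (S \ Y).erase sA = S \ insert sA Y := (Finset.sdiff_insert S Y sA).symm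
  have h2 : mdist ((S \ X).erase s).val ((S \ Y).erase sA).val =
      mdist (insert s X).val (insert sA Y).val := by
    rw [he1, he2]
    exact mdist_compl (Finset.insert_subset hs.1 hX) (Finset.insert_subset hsA.1 hY)
      (by rw [Finset.card_insert_of_notMem hs.2, Finset.card_insert_of_notMem hsA.2, hcard])
  rw [h1, h2] at hmatch
  linarith
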